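/- Let T = [f] be a triangular set consisting of a single nonconstant polynomial f in K[x_1,...,x_n] over an algebraically closed field K, with initial I_f = ini(f). Then Zero(sat(T)) = Zero(Ideal(f) : I_f^∞) equals the Zariski closure of the set of zeros of f where I_f does not vanish. -/

import Mathlib

open MvPolynomial

/-- The leading coefficient (initial) of `f` viewed as a polynomial in the variable `x_k`. -/
noncomputable def leadCoeffWrt {K : Type*} [CommSemiring K] {n : ℕ}
    (k : Fin n) (f : MvPolynomial (Fin n) K) : MvPolynomial (Fin n) K :=
  ∑ m ∈ f.support.filter (fun m => m k = f.degreeOf k),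
    MvPolynomial.monomial (m.erase k) (MvPolynomial.coeff m f)

/-- The common zero set of a set of polynomials. -/
def zeroSet {K : Type*} [CommSemiring K] {n : ℕ} (S : Set (MvPolynomial (Fin n) K)) :
    Set (Fin n → K) :=
  {x | ∀ f ∈ S, MvPolynomial.eval x f = 0}

/-- The Zariski closure of a set `S ⊆ K^n`. -/
def zariskiClosure {K : Type*} [CommSemiring K] {n : ℕ} (S : Set (Fin n → K)) :
    Set (Fin n → K) :=
  zeroSet {f : MvPolynomial (Fin n) K | ∀ x ∈ S, MvPolynomial.eval x f = 0}

/-- For a triangular set `T = [f]` consisting of a single nonconstant polynomial with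
leading variable `x_k` and initial `ini(f)`, the zero set of `sat(T) = (f) : ini(f)^∞`
equals the Zariski closure of the zeros of `f` where `ini(f)` does not vanish. -/
theorem zeroSet_sat_single {K : Type*} [Field K] [IsAlgClosed K] [CharZero K] {n : ℕ}
    (f : MvPolynomial (Fin n) K) (k : Fin n)
    (hnonconst : 0 < f.degreeOf k)
    (hcls : ∀ j, k < j → f.degreeOf j = 0) :
    zeroSet {g : MvPolynomial (Fin n) K |
        ∃ m : ℕ, leadCoeffWrt k f ^ m * g ∈ Ideal.span {f}} =
      zariskiClosure {x : Fin n → K |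
        MvPolynomial.eval x f = 0 ∧ MvPolynomial.eval x (leadCoeffWrt k f) ≠ 0} := by
  set I := leadCoeffWrt k f with hI
  ext x
  simp only [zeroSet, zariskiClosure, Set.mem_setOf_eq]
  constructor
  · intro hx p hp
    -- I * p vanishes on the zero locus of (f)
    have hvan : I * p ∈ MvPolynomial.vanishingIdeal K (MvPolynomial.zeroLocus K (Ideal.span {f})) := by
      rw [MvPolynomial.mem_vanishingIdeal_iff]
      intro y hy
      show MvPolynomial.eval y (I * p) = 0
      have hfy : MvPolynomial.eval y f = 0 := by
        rw [MvPolynomial.mem_zeroLocus_iff] at hy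
        exact hy f (Ideal.subset_span rfl)
      by_cases hIy : MvPolynomial.eval y I = 0
      · rw [map_mul, hIy, zero_mul]
      · rw [map_mul, hp y ⟨hfy, hIy⟩, mul_zero]
    rw [MvPolynomial.vanishingIdeal_zeroLocus_eq_radical] at hvan
    obtain ⟨N, hN⟩ := hvan
    have hmem : I ^ N * p ^ N ∈ Ideal.span {f} := by
      rw [← mul_pow]; exact hN
    have := hx (p ^ N) ⟨N, hmem⟩
    rw [map_pow] at this
    exact (pow_eq_zero_iff' ).mp this |>.1
  · intro hx g ⟨m, hm⟩
    apply hx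
    intro y ⟨hfy, hIy⟩
    rw [Ideal.mem_span_singleton] at hm
    obtain ⟨h, hh⟩ := hm
    have : MvPolynomial.eval y (I ^ m * g) = 0 := by
      rw [hh, map_mul, hfy, zero_mul]
    rw [map_mul, map_pow] at this
    rcases mul_eq_zero.mp this with h1 | h2
    · exact absurd (pow_eq_zero_iff'.mp h1).1 hIy
    · exact h2
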